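/- Let Λ be a finite set of vertices of a graph with maximum degree 6, with |Λ| even, and for 0 ≤ ℓ ≤ |Λ| define Z_Λ^ℓ = ∑_σ γ^{−h(σ)} where the sum is over 2-colorings σ of Λ with exactly ℓ vertices of color c₂ and h(σ) counts bichromatic edges within Λ. Then for any ℓ, Z_Λ^ℓ / Z_Λ^{|Λ|/2} ≤ max{γ^{6(ℓ − |Λ|/2)}, γ^{−6(ℓ − |Λ|/2)}}. -/

import Mathlib

open Finset

section A
variable {V : Type} [DecidableEq V] (G : SimpleGraph V) [DecidableRel G.Adj] [G.LocallyFinite]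
variable (Λ : Finset V)

private def stmt12ind (A : Finset ↥Λ) : ↥Λ → Fin 2 := fun i => if i ∈ A then 1 else 0

private def stmt12F (σ : ↥Λ → Fin 2) : Finset (↥Λ × ↥Λ) :=
  Finset.univ.filter (fun p => G.Adj p.1.val p.2.val ∧ σ p.1 ≠ σ p.2)

private lemma stmt12flip (hdeg : ∀ v : V, G.degree v ≤ 6) (σ : ↥Λ → Fin 2) (v : ↥Λ) (a : Fin 2) :
    (stmt12F G Λ (Function.update σ v a)).card ≤ (stmt12F G Λ σ).card + 12 := by
  classical
  have hsub : stmt12F G Λ (Function.update σ v a) ⊆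
      (stmt12F G Λ σ ∪ Finset.univ.filter (fun p : ↥Λ × ↥Λ => p.1 = v ∧ G.Adj p.1.val p.2.val))
        ∪ Finset.univ.filter (fun p : ↥Λ × ↥Λ => p.2 = v ∧ G.Adj p.1.val p.2.val) := by
    intro p hp
    simp only [stmt12F, Finset.mem_filter, Finset.mem_union, Finset.mem_univ, true_and] at hp ⊢
    by_cases h1 : p.1 = v
    · tauto
    by_cases h2 : p.2 = v
    · tauto
    · rw [Function.update_of_ne h1, Function.update_of_ne h2] at hp
      tauto
  have c1 : (Finset.univ.filter (fun p : ↥Λ × ↥Λ => p.1 = v ∧ G.Adj p.1.val p.2.val)).card ≤ 6 := by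
    have : (Finset.univ.filter (fun p : ↥Λ × ↥Λ => p.1 = v ∧ G.Adj p.1.val p.2.val)).card
        ≤ (G.neighborFinset v.val).card := by
      apply Finset.card_le_card_of_injOn (fun p => p.2.val)
      · intro p hp
        simp only [Finset.mem_coe, Finset.mem_filter] at hp
        simp [SimpleGraph.mem_neighborFinset, ← hp.2.1, hp.2.2]
      · intro p hp q hq hpq
        simp only [Finset.coe_filter, Set.mem_setOf_eq] at hp hq
        ext
        · rw [hp.2.1, hq.2.1]
        · exact hpq
    simpa [G.card_neighborFinset_eq_degree] using this.trans (hdeg v.val)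
  have c2 : (Finset.univ.filter (fun p : ↥Λ × ↥Λ => p.2 = v ∧ G.Adj p.1.val p.2.val)).card ≤ 6 := by
    have : (Finset.univ.filter (fun p : ↥Λ × ↥Λ => p.2 = v ∧ G.Adj p.1.val p.2.val)).card
        ≤ (G.neighborFinset v.val).card := by
      apply Finset.card_le_card_of_injOn (fun p => p.1.val)
      · intro p hp
        simp only [Finset.mem_coe, Finset.mem_filter] at hp
        simp [SimpleGraph.mem_neighborFinset, ← hp.2.1, hp.2.2.symm]
      · intro p hp q hq hpq
        simp only [Finset.coe_filter, Set.mem_setOf_eq] at hp hq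
        ext
        · exact hpq
        · rw [hp.2.1, hq.2.1]
    simpa [G.card_neighborFinset_eq_degree] using this.trans (hdeg v.val)
  have := (Finset.card_le_card hsub).trans
    ((Finset.card_union_le _ _).trans (Nat.add_le_add_right (Finset.card_union_le _ _) _))
  omega
private lemma stmt12step (h : (↥Λ → Fin 2) → ℕ)
    (hh : ∀ σ : ↥Λ → Fin 2, h σ = (stmt12F G Λ σ).card / 2)
    (hdeg : ∀ v : V, G.degree v ≤ 6) (σ : ↥Λ → Fin 2) (v : ↥Λ) (a : Fin 2) :
    h (Function.update σ v a) ≤ h σ + 6 := by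
  have h1 := hh (Function.update σ v a)
  have h2 := hh σ
  have h3 := stmt12flip G Λ hdeg σ v a
  omega

private lemma stmt12multi (h : (↥Λ → Fin 2) → ℕ)
    (hh : ∀ σ : ↥Λ → Fin 2, h σ = (stmt12F G Λ σ).card / 2)
    (hdeg : ∀ v : V, G.degree v ≤ 6) : ∀ (k : ℕ) (σ τ : ↥Λ → Fin 2),
    (Finset.univ.filter (fun i => σ i ≠ τ i)).card = k → h σ ≤ h τ + 6 * k := by
  intro k
  induction k with
  | zero =>
    intro σ τ hc
    have : σ = τ := by
      funext i
      by_contra hne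
      have hmem : i ∈ Finset.univ.filter (fun i => σ i ≠ τ i) := by simp [hne]
      rw [Finset.card_eq_zero] at hc
      exact Finset.notMem_empty i (hc ▸ hmem)
    simp [this]
  | succ n ih =>
    intro σ τ hc
    have hne : (Finset.univ.filter (fun i => σ i ≠ τ i)).Nonempty := by
      rw [← Finset.card_pos, hc]; omega
    obtain ⟨v, hv⟩ := hne
    have hstep := stmt12step G Λ h hh hdeg τ v (σ v)
    have hcard : Finset.univ.filter (fun i => σ i ≠ Function.update τ v (σ v) i)
        = (Finset.univ.filter (fun i => σ i ≠ τ i)).erase v := by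
      ext i
      by_cases hiv : i = v
      · subst hiv; simp
      · simp [Function.update_of_ne hiv, hiv]
    have := ih σ (Function.update τ v (σ v))
      (by rw [hcard, Finset.card_erase_of_mem hv, hc]; rfl)
    omega

private lemma stmt12subsetbound (h : (↥Λ → Fin 2) → ℕ)
    (hh : ∀ σ : ↥Λ → Fin 2, h σ = (stmt12F G Λ σ).card / 2)
    (hdeg : ∀ v : V, G.degree v ≤ 6) (A B : Finset ↥Λ) (hBA : B ⊆ A) :
    h (stmt12ind Λ A) ≤ h (stmt12ind Λ B) + 6 * (A.card - B.card) ∧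
    h (stmt12ind Λ B) ≤ h (stmt12ind Λ A) + 6 * (A.card - B.card) := by
  have hd : Finset.univ.filter (fun i => stmt12ind Λ A i ≠ stmt12ind Λ B i) = A \ B := by
    ext i
    rw [Finset.mem_filter]
    simp only [Finset.mem_filter, Finset.mem_univ, true_and, Finset.mem_sdiff, stmt12ind]
    constructor
    · intro hne
      by_cases h1 : i ∈ A <;> by_cases h2 : i ∈ B <;> simp [h1, h2] at hne ⊢
      exact absurd (hBA h2) h1
    · rintro ⟨h1, h2⟩
      simp [h1, h2]
  have hd2 : Finset.univ.filter (fun i => stmt12ind Λ B i ≠ stmt12ind Λ A i) = A \ B := by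
    rw [← hd]; ext i; simp [ne_comm]
  have hcd : (A \ B).card = A.card - B.card := Finset.card_sdiff_of_subset hBA
  exact ⟨stmt12multi G Λ h hh hdeg _ _ _ (by rw [hd, hcd]),
    stmt12multi G Λ h hh hdeg _ _ _ (by rw [hd2, hcd])⟩
private lemma stmt12fin2 (x : Fin 2) : x = 0 ∨ x = 1 := by omega

private lemma stmt12indfilter (σ : ↥Λ → Fin 2) :
    stmt12ind Λ (Finset.univ.filter (fun i => σ i = 1)) = σ := by
  funext i
  by_cases hi : σ i = 1
  · simp [stmt12ind, hi]
  · have h0 : σ i = 0 := by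
      rcases stmt12fin2 (σ i) with h | h
      · exact h
      · exact absurd h hi
    simp [stmt12ind, hi, h0]

-- Z reindexed as sum over finsets
private lemma stmt12Zeq (γ : ℝ) (h : (↥Λ → Fin 2) → ℕ) (m : ℕ) :
    ∑ σ ∈ (Finset.univ : Finset (↥Λ → Fin 2)).filter
        (fun σ => (Finset.univ.filter (fun i => σ i = 1)).card = m),
      γ ^ (-(h σ : ℤ))
    = ∑ A ∈ (Finset.univ : Finset (Finset ↥Λ)).filter (fun A => A.card = m),
      γ ^ (-(h (stmt12ind Λ A) : ℤ)) := by
  apply Finset.sum_bij' (fun σ _ => Finset.univ.filter (fun i => σ i = 1))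
    (fun A _ => stmt12ind Λ A)
  · intro σ hσ
    simp only [Finset.mem_filter, Finset.mem_univ, true_and] at hσ ⊢
    exact hσ
  · intro A hA
    simp only [Finset.mem_filter, Finset.mem_univ, true_and] at hA ⊢
    rw [← hA]
    congr 1
    ext i
    simp only [Finset.mem_filter, Finset.mem_univ, true_and, stmt12ind]
    by_cases hi : i ∈ A <;> simp [hi]
  · intro σ hσ
    exact stmt12indfilter Λ σ
  · intro A hA
    ext i
    simp only [Finset.mem_filter, Finset.mem_univ, true_and, stmt12ind]
    by_cases hi : i ∈ A <;> simp [hi]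
  · intro σ hσ
    rw [stmt12indfilter Λ σ]

-- positivity
private lemma stmt12Zpos (γ : ℝ) (hγ : 0 < γ) (h : (↥Λ → Fin 2) → ℕ) (m : ℕ)
    (hm : m ≤ Λ.card) :
    0 < ∑ A ∈ (Finset.univ : Finset (Finset ↥Λ)).filter (fun A => A.card = m),
      γ ^ (-(h (stmt12ind Λ A) : ℤ)) := by
  apply Finset.sum_pos
  · intro A _; exact zpow_pos hγ _
  · obtain ⟨A, _hsub, hA⟩ := Finset.exists_subset_card_eq
      (show m ≤ (Finset.univ : Finset ↥Λ).card by simpa [Fintype.card_coe] using hm)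
    exact ⟨A, Finset.mem_filter.mpr ⟨Finset.mem_univ A, hA⟩⟩

-- superset count
private lemma stmt12supcount (ℓ m : ℕ) (hmℓ : m ≤ ℓ) (B : Finset ↥Λ) (hB : B.card = m) :
    (((Finset.univ : Finset (Finset ↥Λ)).filter (fun A => A.card = ℓ)).filter
      (fun A => B ⊆ A)).card = (Λ.card - m).choose (ℓ - m) := by
  have key : (((Finset.univ : Finset (Finset ↥Λ)).filter (fun A => A.card = ℓ)).filter
      (fun A => B ⊆ A)).card = (Bᶜ.powersetCard (ℓ - m)).card := by
    apply Finset.card_bij' (fun A _ => A \ B) (fun C _ => C ∪ B)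
    · intro A hA
      simp only [Finset.mem_filter, Finset.mem_univ, true_and] at hA
      rw [Finset.mem_powersetCard]
      constructor
      · intro i hi
        simp only [Finset.mem_sdiff] at hi
        simpa using hi.2
      · rw [Finset.card_sdiff_of_subset hA.2, hA.1, hB]
    · intro C hC
      rw [Finset.mem_powersetCard] at hC
      have hdisj : Disjoint C B := by
        rw [Finset.disjoint_right]
        intro i hiB hiC
        have := hC.1 hiC
        simp at this
        exact this hiB
      simp only [Finset.mem_filter, Finset.mem_univ, true_and]
      refine ⟨?_, Finset.subset_union_right⟩
      rw [Finset.card_union_of_disjoint hdisj, hC.2, hB]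
      omega
    · intro A hA
      simp only [Finset.mem_filter, Finset.mem_univ, true_and] at hA
      exact Finset.sdiff_union_of_subset hA.2
    · intro C hC
      rw [Finset.mem_powersetCard] at hC
      have hdisj : Disjoint C B := by
        rw [Finset.disjoint_right]
        intro i hiB hiC
        have := hC.1 hiC
        simp at this
        exact this hiB
      rw [Finset.union_sdiff_cancel_right hdisj]
  rw [key, Finset.card_powersetCard, Finset.card_compl, hB, Fintype.card_coe]
private lemma stmt12main (γ : ℝ) (hγ : 0 < γ) (h : (↥Λ → Fin 2) → ℕ)
    (hh : ∀ σ : ↥Λ → Fin 2, h σ = (stmt12F G Λ σ).card / 2)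
    (hdeg : ∀ v : V, G.degree v ≤ 6)
    (ℓ m : ℕ) (hmℓ : m ≤ ℓ) (hℓn : ℓ ≤ Λ.card) (hn : Λ.card ≤ ℓ + m) :
    ∑ A ∈ (Finset.univ : Finset (Finset ↥Λ)).filter (fun A => A.card = ℓ),
      γ ^ (-(h (stmt12ind Λ A) : ℤ))
    ≤ (∑ B ∈ (Finset.univ : Finset (Finset ↥Λ)).filter (fun B => B.card = m),
        γ ^ (-(h (stmt12ind Λ B) : ℤ)))
      * max (γ ^ ((6 * (ℓ - m) : ℕ) : ℤ)) (γ ^ (-((6 * (ℓ - m) : ℕ) : ℤ))) := by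
  classical
  set k : ℕ := ℓ - m with hk
  set M : ℝ := max (γ ^ ((6 * k : ℕ) : ℤ)) (γ ^ (-((6 * k : ℕ) : ℤ))) with hM
  set W : Finset ↥Λ → ℝ := fun A => γ ^ (-(h (stmt12ind Λ A) : ℤ)) with hW
  set Sl := (Finset.univ : Finset (Finset ↥Λ)).filter (fun A => A.card = ℓ) with hSl
  set Sm := (Finset.univ : Finset (Finset ↥Λ)).filter (fun B => B.card = m) with hSm
  have hγ' : (γ : ℝ) ≠ 0 := ne_of_gt hγ
  -- pointwise bound
  have key : ∀ A ∈ Sl, ∀ B ∈ A.powersetCard m, W A ≤ W B * M := by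
    intro A hA B hB
    rw [hSl, Finset.mem_filter] at hA
    rw [Finset.mem_powersetCard] at hB
    obtain ⟨hb1, hb2⟩ := stmt12subsetbound G Λ h hh hdeg A B hB.1
    rw [hA.2, hB.2] at hb1 hb2
    have e : W A = W B * γ ^ ((h (stmt12ind Λ B) : ℤ) - (h (stmt12ind Λ A) : ℤ)) := by
      rw [hW]
      simp only
      rw [← zpow_add₀ hγ']
      ring_nf
    rw [e]
    apply mul_le_mul_of_nonneg_left _ (le_of_lt (zpow_pos hγ _))
    rcases le_total 1 γ with h1 | h1
    · refine le_trans (zpow_le_zpow_right₀ h1 ?_) (le_max_left _ _)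
      omega
    · refine le_trans (zpow_le_zpow_right_of_le_one₀ hγ h1 ?_) (le_max_right _ _)
      omega
  have hMpos : 0 < M := lt_max_of_lt_left (zpow_pos hγ _)
  have hWpos : ∀ A, 0 < W A := fun A => zpow_pos hγ _
  have hchoosepos : 0 < (ℓ.choose m : ℝ) := by
    exact_mod_cast Nat.choose_pos hmℓ
  have main : (ℓ.choose m : ℝ) * ∑ A ∈ Sl, W A
      ≤ (ℓ.choose m : ℝ) * ((∑ B ∈ Sm, W B) * M) := by
    calc (ℓ.choose m : ℝ) * ∑ A ∈ Sl, W A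
        = ∑ A ∈ Sl, ∑ _B ∈ A.powersetCard m, W A := by
          rw [Finset.mul_sum]
          refine Finset.sum_congr rfl fun A hA => ?_
          rw [hSl, Finset.mem_filter] at hA
          rw [Finset.sum_const, Finset.card_powersetCard, hA.2, nsmul_eq_mul]
      _ ≤ ∑ A ∈ Sl, ∑ B ∈ A.powersetCard m, W B * M := by
          refine Finset.sum_le_sum fun A hA => Finset.sum_le_sum fun B hB => key A hA B hB
      _ = ∑ B ∈ Sm, ∑ _A ∈ Sl.filter (fun A => B ⊆ A), W B * M := by
          refine Finset.sum_comm' fun A B => ?_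
          simp only [hSl, hSm, Finset.mem_filter, Finset.mem_univ, true_and,
            Finset.mem_powersetCard]
          tauto
      _ = ∑ B ∈ Sm, ((Λ.card - m).choose k : ℝ) * (W B * M) := by
          refine Finset.sum_congr rfl fun B hB => ?_
          rw [hSm, Finset.mem_filter] at hB
          rw [Finset.sum_const, stmt12supcount Λ ℓ m hmℓ B hB.2, nsmul_eq_mul, hk]
      _ = ((Λ.card - m).choose k : ℝ) * ((∑ B ∈ Sm, W B) * M) := by
          rw [← Finset.mul_sum, Finset.sum_mul]
      _ ≤ (ℓ.choose m : ℝ) * ((∑ B ∈ Sm, W B) * M) := by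
          apply mul_le_mul_of_nonneg_right
          · have h1 : (Λ.card - m).choose k ≤ ℓ.choose k :=
              Nat.choose_le_choose k (by omega)
            have h2 : ℓ.choose k = ℓ.choose m := by
              rw [hk, Nat.choose_symm hmℓ]
            exact_mod_cast h1.trans_eq h2
          · positivity
  exact le_of_mul_le_mul_left main hchoosepos

private lemma stmt12symm (γ : ℝ) (h : (↥Λ → Fin 2) → ℕ)
    (hh : ∀ σ : ↥Λ → Fin 2, h σ = (stmt12F G Λ σ).card / 2)
    (ℓ : ℕ) (hℓ : ℓ ≤ Λ.card) :
    ∑ A ∈ (Finset.univ : Finset (Finset ↥Λ)).filter (fun A => A.card = ℓ),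
      γ ^ (-(h (stmt12ind Λ A) : ℤ))
    = ∑ A ∈ (Finset.univ : Finset (Finset ↥Λ)).filter (fun A => A.card = Λ.card - ℓ),
      γ ^ (-(h (stmt12ind Λ A) : ℤ)) := by
  classical
  have hval : ∀ A : Finset ↥Λ, h (stmt12ind Λ Aᶜ) = h (stmt12ind Λ A) := by
    intro A
    have hFeq : stmt12F G Λ (stmt12ind Λ Aᶜ) = stmt12F G Λ (stmt12ind Λ A) := by
      ext p
      simp only [stmt12F, Finset.mem_filter, Finset.mem_univ, true_and, and_congr_right_iff]
      intro _
      by_cases h1 : p.1 ∈ A <;> by_cases h2 : p.2 ∈ A <;>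
        simp [stmt12ind, h1, h2, Finset.mem_compl]
    rw [hh, hh, hFeq]
  refine Finset.sum_bij' (fun A _ => Aᶜ) (fun A _ => Aᶜ) ?_ ?_ ?_ ?_ ?_
  case refine_1 =>
    intro A hA
    simp only [Finset.mem_filter, Finset.mem_univ, true_and] at hA ⊢
    rw [Finset.card_compl, Fintype.card_coe, hA]
  case refine_2 =>
    intro A hA
    simp only [Finset.mem_filter, Finset.mem_univ, true_and] at hA ⊢
    have h1 : A.card ≤ Λ.card := by
      simpa [Fintype.card_coe] using Finset.card_le_univ A
    rw [Finset.card_compl, Fintype.card_coe, hA]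
    omega
  case refine_3 => intro A _; exact compl_compl A
  case refine_4 => intro A _; exact compl_compl A
  case refine_5 => intro A _; rw [hval]
end A

/-- Ratio bound on the constrained partition functions `Z_Λ^ℓ` in a graph of
maximum degree 6: with `Z_Λ^ℓ = ∑_σ γ^{−h(σ)}` over 2-colorings of `Λ` with
exactly `ℓ` vertices of color `c₂` and `h(σ)` the number of bichromatic edges
within `Λ`, one has
`Z_Λ^ℓ / Z_Λ^{|Λ|/2} ≤ max{γ^{6(ℓ−|Λ|/2)}, γ^{−6(ℓ−|Λ|/2)}}`. -/
theorem stmt_12 (V : Type) [DecidableEq V] (G : SimpleGraph V)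
    [DecidableRel G.Adj] [G.LocallyFinite] (hdeg : ∀ v : V, G.degree v ≤ 6)
    (Λ : Finset V) (hΛ : Even Λ.card) (γ : ℝ) (hγ : 0 < γ)
    (ℓ : ℕ) (hℓ : ℓ ≤ Λ.card)
    (h : (↥Λ → Fin 2) → ℕ)
    (hh : ∀ σ : ↥Λ → Fin 2, h σ =
      ((Finset.univ : Finset (↥Λ × ↥Λ)).filter
        (fun p => G.Adj p.1.val p.2.val ∧ σ p.1 ≠ σ p.2)).card / 2)
    (Z : ℕ → ℝ)
    (hZ : ∀ m : ℕ, Z m =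
      ∑ σ ∈ (Finset.univ : Finset (↥Λ → Fin 2)).filter
          (fun σ => (Finset.univ.filter (fun i => σ i = 1)).card = m),
        γ ^ (-(h σ : ℤ))) :
    Z ℓ / Z (Λ.card / 2) ≤
      max (γ ^ (6 * ((ℓ : ℤ) - Λ.card / 2)))
        (γ ^ (-(6 * ((ℓ : ℤ) - Λ.card / 2)))) := by
  classical
  have hh' : ∀ σ : ↥Λ → Fin 2, h σ = (stmt12F G Λ σ).card / 2 := hh
  obtain ⟨m, hm2⟩ := hΛ
  have hmhalf : Λ.card / 2 = m := by omega
  have hmn : m ≤ Λ.card := by omega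
  have hihalf : (Λ.card : ℤ) / 2 = (m : ℤ) := by omega
  rw [hmhalf, hZ ℓ, hZ m, stmt12Zeq Λ γ h ℓ, stmt12Zeq Λ γ h m]
  have hpos := stmt12Zpos Λ γ hγ h m hmn
  rcases le_or_gt m ℓ with hcase | hcase
  · have key := stmt12main G Λ γ hγ h hh' hdeg ℓ m hcase hℓ (by omega)
    have hexp : 6 * ((ℓ : ℤ) - (Λ.card : ℤ) / 2) = ((6 * (ℓ - m) : ℕ) : ℤ) := by
      omega
    rw [hexp]
    rw [div_le_iff₀ hpos]
    rw [mul_comm] at key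
    exact key
  · rw [stmt12symm G Λ γ h hh' ℓ hℓ]
    have key := stmt12main G Λ γ hγ h hh' hdeg (Λ.card - ℓ) m (by omega) (by omega) (by omega)
    have hexp : ((6 * ((Λ.card - ℓ) - m) : ℕ) : ℤ) = -(6 * ((ℓ : ℤ) - (Λ.card : ℤ) / 2)) := by
      omega
    rw [hexp, neg_neg, max_comm] at key
    rw [div_le_iff₀ hpos]
    rw [mul_comm] at key
    exact key
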